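/- For every point x of the unit ball 𝔹ⁿ and every 0 < r < 1, the ball inclusions B_ρ(x, log((2+r)/(2−r))) ⊆ B_c̃(x, r) ⊆ B_ρ(x, log((1+r)/(1−r))) hold; equivalently, {y ∈ 𝔹ⁿ : |x−y|/√(|x−y|² + (1−|x|²)(1−|y|²)) < r/2} ⊆ {y ∈ 𝔹ⁿ : c̃_{𝔹ⁿ}(x,y) < r} ⊆ {y ∈ 𝔹ⁿ : |x−y|/√(|x−y|² + (1−|x|²)(1−|y|²)) < r}. -/

import Mathlib

open Metric Set

/-- The new hyperbolic type metric on the unit ball `𝔹ⁿ` (dimension `n + 2 ≥ 2`):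
`c̃_{𝔹ⁿ}(x,y) = |x−y| / inf_{z∈S^{n−1}} max{|x−z|, |y−z|}`. -/
noncomputable def ctildeB {n : ℕ} (x y : EuclideanSpace ℝ (Fin (n + 2))) : ℝ :=
  dist x y /
    sInf ((fun z => max (dist x z) (dist y z)) '' sphere (0 : EuclideanSpace ℝ (Fin (n + 2))) 1)

/-- `th(ρ_{𝔹ⁿ}(x,y)/2) = |x−y| / √(|x−y|² + (1−|x|²)(1−|y|²))` for the hyperbolic
metric of `𝔹ⁿ`; note `ρ_{𝔹ⁿ}(x,y) < log((2+r)/(2−r)) ↔ th(ρ_{𝔹ⁿ}(x,y)/2) < r/2` and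
`ρ_{𝔹ⁿ}(x,y) < log((1+r)/(1−r)) ↔ th(ρ_{𝔹ⁿ}(x,y)/2) < r`. -/
noncomputable def thRhoB {n : ℕ} (x y : EuclideanSpace ℝ (Fin (n + 2))) : ℝ :=
  dist x y / Real.sqrt (dist x y ^ 2 + (1 - ‖x‖ ^ 2) * (1 - ‖y‖ ^ 2))

private lemma A_ident {n : ℕ} (x y : EuclideanSpace ℝ (Fin (n + 2))) :
    dist x y ^ 2 + (1 - ‖x‖ ^ 2) * (1 - ‖y‖ ^ 2)
      = 1 + ‖x‖ ^ 2 * ‖y‖ ^ 2 - 2 * (inner ℝ x y : ℝ) := by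
  rw [dist_eq_norm, norm_sub_sq_real]; ring


private lemma norm_eq_one_of_sq' {n : ℕ} {z : EuclideanSpace ℝ (Fin (n + 2))}
    (h : ‖z‖ ^ 2 = 1) : ‖z‖ = 1 := by
  nlinarith [norm_nonneg z]

private lemma exists_unit_orthogonal {n : ℕ} (x : EuclideanSpace ℝ (Fin (n + 2)))
    (hx : x ≠ 0) : ∃ δ : EuclideanSpace ℝ (Fin (n + 2)), ‖δ‖ = 1 ∧ (inner ℝ x δ : ℝ) = 0 := by
  have hne : ((ℝ ∙ x)ᗮ : Submodule ℝ (EuclideanSpace ℝ (Fin (n + 2)))) ≠ ⊥ := by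
    intro hbot
    have h1 := Submodule.finrank_add_finrank_orthogonal (𝕜 := ℝ) (ℝ ∙ x)
    rw [finrank_span_singleton hx, hbot, finrank_bot, finrank_euclideanSpace_fin] at h1
    omega
  obtain ⟨v, hv, hv0⟩ := Submodule.exists_mem_ne_zero_of_ne_bot hne
  refine ⟨‖v‖⁻¹ • v, norm_smul_inv_norm hv0, ?_⟩
  rw [real_inner_smul_right]
  have : (inner ℝ x v : ℝ) = 0 :=
    (Submodule.mem_orthogonal _ v).mp hv x (Submodule.mem_span_singleton_self x)
  rw [this, mul_zero]


private lemma scalar_alpha (u v c : ℝ) (hu0 : 0 ≤ u) (hv0 : 0 ≤ v) (hu : u < 1)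
    (hv : v < 1) (hcle : c ≤ u * v) :
    (c + (u ^ 2 - u ^ 2 * v ^ 2) / 2) * (1 - u ^ 2 * v ^ 2)
      ≤ (1 - v ^ 2) * u ^ 2 + (1 - u ^ 2) * c := by
  have h2c : (0:ℝ) ≤ 1 + u ^ 2 * v ^ 2 - 2 * c := by nlinarith [sq_nonneg (1 - u * v)]
  have h1v2 : (0:ℝ) ≤ 1 - v ^ 2 := by nlinarith
  nlinarith [mul_nonneg (mul_nonneg (sq_nonneg u) h1v2) h2c]

private lemma scalar_norm (u v c : ℝ) (hu0 : 0 ≤ u) (hv0 : 0 ≤ v) (hu : u < 1)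
    (hv : v < 1) (hcle : c ≤ u * v) :
    (1 - v ^ 2) ^ 2 * u ^ 2 + 2 * (1 - v ^ 2) * (1 - u ^ 2) * c + (1 - u ^ 2) ^ 2 * v ^ 2
      ≤ (1 - u ^ 2 * v ^ 2) ^ 2 := by
  have h1v2 : (0:ℝ) ≤ 1 - v ^ 2 := by nlinarith
  have h1u2 : (0:ℝ) ≤ 1 - u ^ 2 := by nlinarith
  have t1 : (0:ℝ) ≤ 2 * (1 - v ^ 2) * (1 - u ^ 2) * (u * v - c) :=
    mul_nonneg (mul_nonneg (mul_nonneg (by norm_num) h1v2) h1u2) (sub_nonneg.mpr hcle)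
  have t2 : (0:ℝ) ≤ (1 - u * v) ^ 2 * ((1 - u) * (1 + u)) * ((1 - v) * (1 + v)) := by
    apply mul_nonneg
    apply mul_nonneg (sq_nonneg _)
    · exact mul_nonneg (by linarith) (by linarith)
    · exact mul_nonneg (by linarith) (by linarith)
  nlinarith [t1, t2]

set_option maxHeartbeats 1000000 in
private lemma exists_good_z {n : ℕ} (x y : EuclideanSpace ℝ (Fin (n + 2)))
    (hx : ‖x‖ < 1) (hy : ‖y‖ < 1) :
    ∃ z : EuclideanSpace ℝ (Fin (n + 2)), ‖z‖ = 1 ∧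
      (inner ℝ x y : ℝ) + (‖x‖ ^ 2 - ‖x‖ ^ 2 * ‖y‖ ^ 2) / 2 ≤ (inner ℝ x z : ℝ) ∧
      (inner ℝ x y : ℝ) + (‖y‖ ^ 2 - ‖x‖ ^ 2 * ‖y‖ ^ 2) / 2 ≤ (inner ℝ y z : ℝ) := by
  rcases eq_or_ne x 0 with rfl | hx0
  · rcases eq_or_ne y 0 with rfl | hy0
    · refine ⟨EuclideanSpace.single 0 1, ?_, ?_, ?_⟩
      · rw [EuclideanSpace.norm_single]; norm_num
      · simp
      · simp
    · refine ⟨‖y‖⁻¹ • y, norm_smul_inv_norm hy0, ?_, ?_⟩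
      · simp
      · rw [real_inner_smul_right, real_inner_self_eq_norm_sq]
        have hv0 : 0 < ‖y‖ := norm_pos_iff.mpr hy0
        have : ‖y‖⁻¹ * ‖y‖ ^ 2 = ‖y‖ := by field_simp
        rw [this]
        simp only [inner_zero_left, norm_zero]
        nlinarith [hv0, hy]
  · rcases eq_or_ne y 0 with rfl | hy0
    · refine ⟨‖x‖⁻¹ • x, norm_smul_inv_norm hx0, ?_, ?_⟩
      · rw [real_inner_smul_right, real_inner_self_eq_norm_sq]
        have hu0 : 0 < ‖x‖ := norm_pos_iff.mpr hx0
        have : ‖x‖⁻¹ * ‖x‖ ^ 2 = ‖x‖ := by field_simp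
        rw [this]
        simp only [inner_zero_right, norm_zero]
        nlinarith [hu0, hx]
      · simp
    · -- main case
      set u := ‖x‖ with hu
      clear_value u
      set v := ‖y‖ with hv
      clear_value v
      set c : ℝ := inner ℝ x y with hc
      clear_value c
      have hu0 : 0 < u := by rw [hu]; exact norm_pos_iff.mpr hx0
      have hv0 : 0 < v := by rw [hv]; exact norm_pos_iff.mpr hy0
      have habs : |c| ≤ u * v := by rw [hu, hv, hc]; exact abs_real_inner_le_norm x y
      have hcle : c ≤ u * v := (abs_le.mp habs).2
      have hcge : -(u * v) ≤ c := (abs_le.mp habs).1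
      have hN : 0 < 1 - u ^ 2 * v ^ 2 := by
        nlinarith [mul_nonneg (sq_nonneg u) (by nlinarith : (0:ℝ) ≤ 1 - v ^ 2)]
      set N : ℝ := 1 - u ^ 2 * v ^ 2 with hNdef
      clear_value N
      set w0 := (1 - v ^ 2) • x + (1 - u ^ 2) • y with hw0
      clear_value w0
      set z₀ := (N⁻¹ : ℝ) • w0 with hz₀
      clear_value z₀
      have ixw : (inner ℝ x w0 : ℝ) = (1 - v ^ 2) * u ^ 2 + (1 - u ^ 2) * c := by
        rw [hw0, inner_add_right, real_inner_smul_right, real_inner_smul_right,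
          real_inner_self_eq_norm_sq, ← hc, ← hu]
      have iyw : (inner ℝ y w0 : ℝ) = (1 - v ^ 2) * c + (1 - u ^ 2) * v ^ 2 := by
        rw [hw0, inner_add_right, real_inner_smul_right, real_inner_smul_right,
          real_inner_self_eq_norm_sq, real_inner_comm x y, ← hc, ← hv]
      have h1v2 : (0:ℝ) ≤ 1 - v ^ 2 := by nlinarith
      have h1u2 : (0:ℝ) ≤ 1 - u ^ 2 := by nlinarith
      have nw : ‖w0‖ ^ 2 = (1 - v ^ 2) ^ 2 * u ^ 2 + 2 * (1 - v ^ 2) * (1 - u ^ 2) * c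
          + (1 - u ^ 2) ^ 2 * v ^ 2 := by
        rw [hw0, norm_add_sq_real, real_inner_smul_left, real_inner_smul_right,
          norm_smul, norm_smul, Real.norm_eq_abs, Real.norm_eq_abs,
          abs_of_nonneg h1v2, abs_of_nonneg h1u2, ← hc, ← hu, ← hv]
        ring
      have ixz : (inner ℝ x z₀ : ℝ) = N⁻¹ * ((1 - v ^ 2) * u ^ 2 + (1 - u ^ 2) * c) := by
        rw [hz₀, real_inner_smul_right, ixw]
      have iyz : (inner ℝ y z₀ : ℝ) = N⁻¹ * ((1 - v ^ 2) * c + (1 - u ^ 2) * v ^ 2) := by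
        rw [hz₀, real_inner_smul_right, iyw]
      have hα : c + (u ^ 2 - u ^ 2 * v ^ 2) / 2 ≤ (inner ℝ x z₀ : ℝ) := by
        rw [ixz, inv_mul_eq_div, le_div_iff₀ hN, hNdef]
        have := scalar_alpha u v c hu0.le hv0.le hx hy hcle
        linarith
      have hβ : c + (v ^ 2 - u ^ 2 * v ^ 2) / 2 ≤ (inner ℝ y z₀ : ℝ) := by
        rw [iyz, inv_mul_eq_div, le_div_iff₀ hN, hNdef]
        have := scalar_alpha v u c hv0.le hu0.le hy hx (by linarith [hcle] : c ≤ v * u)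
        have hcomm : v ^ 2 * u ^ 2 = u ^ 2 * v ^ 2 := by ring
        nlinarith [this]
      have hw0N : ‖w0‖ ^ 2 ≤ N ^ 2 := by
        rw [nw, hNdef]
        exact scalar_norm u v c hu0.le hv0.le hx hy hcle
      have hz₀norm : ‖z₀‖ ^ 2 ≤ 1 := by
        have nz : ‖z₀‖ ^ 2 = N⁻¹ ^ 2 * ‖w0‖ ^ 2 := by
          rw [hz₀, norm_smul, Real.norm_eq_abs, abs_of_nonneg (inv_nonneg.mpr hN.le)]
          ring
        rw [nz]
        have : N⁻¹ ^ 2 * ‖w0‖ ^ 2 ≤ N⁻¹ ^ 2 * N ^ 2 :=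
          mul_le_mul_of_nonneg_left hw0N (by positivity)
        have hNN : N⁻¹ ^ 2 * N ^ 2 = 1 := by field_simp
        linarith
      set δ := v • x + u • y with hδ
      clear_value δ
      have iδx : (inner ℝ x δ : ℝ) = v * u ^ 2 + u * c := by
        rw [hδ, inner_add_right, real_inner_smul_right, real_inner_smul_right,
          real_inner_self_eq_norm_sq, ← hc, ← hu]
      have iδy : (inner ℝ y δ : ℝ) = v * c + u * v ^ 2 := by
        rw [hδ, inner_add_right, real_inner_smul_right, real_inner_smul_right,
          real_inner_self_eq_norm_sq, real_inner_comm x y, ← hc, ← hv]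
      have hδx : (0:ℝ) ≤ inner ℝ x δ := by
        rw [iδx]
        linarith [mul_le_mul_of_nonneg_left hcge hu0.le]
      have hδy : (0:ℝ) ≤ inner ℝ y δ := by
        rw [iδy]
        linarith [mul_le_mul_of_nonneg_left hcge hv0.le]
      by_cases hδ0 : δ = 0
      · -- x, y antiparallel
        have h0 : v • x + u • y = 0 := by rw [← hδ]; exact hδ0
        obtain ⟨δ', hδ'1, hδ'2⟩ := exists_unit_orthogonal x hx0
        have hyδ' : (inner ℝ y δ' : ℝ) = 0 := by
          have h1 : (inner ℝ (v • x + u • y) δ' : ℝ) = 0 := by rw [h0, inner_zero_left]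
          rw [inner_add_left, real_inner_smul_left, real_inner_smul_left,
            hδ'2] at h1
          have h2 : u * (inner ℝ y δ' : ℝ) = 0 := by linarith
          rcases mul_eq_zero.mp h2 with h | h
          · exact absurd h hu0.ne'
          · exact h
        have hz₀δ' : (inner ℝ z₀ δ' : ℝ) = 0 := by
          rw [hz₀, hw0, real_inner_smul_left, inner_add_left, real_inner_smul_left,
            real_inner_smul_left, hδ'2, hyδ']
          ring
        set τ := Real.sqrt (1 - ‖z₀‖ ^ 2) with hτ
        have hτsq : τ ^ 2 = 1 - ‖z₀‖ ^ 2 := Real.sq_sqrt (by linarith)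
        have hτnn : 0 ≤ τ := Real.sqrt_nonneg _
        refine ⟨z₀ + τ • δ', ?_, ?_, ?_⟩
        · apply norm_eq_one_of_sq'
          rw [norm_add_sq_real, real_inner_smul_right, hz₀δ', norm_smul,
            Real.norm_eq_abs]
          rw [mul_pow, sq_abs, hδ'1]
          rw [hτsq]; ring
        · rw [inner_add_right, real_inner_smul_right, hδ'2]
          simpa using hα
        · rw [inner_add_right, real_inner_smul_right, hyδ']
          simpa using hβ
      · set δ0 := ‖δ‖⁻¹ • δ with hδ0def
        have hδ0n : ‖δ0‖ = 1 := norm_smul_inv_norm hδ0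
        have hxδ0 : (0:ℝ) ≤ inner ℝ x δ0 := by
          rw [hδ0def, real_inner_smul_right]
          exact mul_nonneg (inv_nonneg.mpr (norm_nonneg _)) hδx
        have hyδ0 : (0:ℝ) ≤ inner ℝ y δ0 := by
          rw [hδ0def, real_inner_smul_right]
          exact mul_nonneg (inv_nonneg.mpr (norm_nonneg _)) hδy
        set s : ℝ := inner ℝ z₀ δ0 with hs
        have hrad : (0:ℝ) ≤ s ^ 2 + 1 - ‖z₀‖ ^ 2 := by nlinarith [sq_nonneg s]
        set τ := -s + Real.sqrt (s ^ 2 + 1 - ‖z₀‖ ^ 2) with hτ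
        have hτnn : 0 ≤ τ := by
          rw [hτ]
          have h1 : |s| ≤ Real.sqrt (s ^ 2 + 1 - ‖z₀‖ ^ 2) := by
            rw [← Real.sqrt_sq_eq_abs]
            exact Real.sqrt_le_sqrt (by linarith)
          have := le_abs_self s
          linarith
        have hsum : (τ + s) ^ 2 = s ^ 2 + 1 - ‖z₀‖ ^ 2 := by
          rw [hτ]
          have : -s + Real.sqrt (s ^ 2 + 1 - ‖z₀‖ ^ 2) + s
              = Real.sqrt (s ^ 2 + 1 - ‖z₀‖ ^ 2) := by ring
          rw [this, Real.sq_sqrt hrad]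
        refine ⟨z₀ + τ • δ0, ?_, ?_, ?_⟩
        · apply norm_eq_one_of_sq'
          rw [norm_add_sq_real, real_inner_smul_right, ← hs, norm_smul,
            Real.norm_eq_abs, mul_pow, sq_abs, hδ0n]
          nlinarith [hsum]
        · rw [inner_add_right, real_inner_smul_right]
          exact hα.trans (le_add_of_nonneg_right (mul_nonneg hτnn hxδ0))
        · rw [inner_add_right, real_inner_smul_right]
          exact hβ.trans (le_add_of_nonneg_right (mul_nonneg hτnn hyδ0))


private lemma upper_bound {n : ℕ} (x y z : EuclideanSpace ℝ (Fin (n + 2)))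
    (hy : ‖y‖ ≤ 1) (hz : ‖z‖ = 1) :
    Real.sqrt (dist x y ^ 2 + (1 - ‖x‖ ^ 2) * (1 - ‖y‖ ^ 2))
      ≤ 2 * max (dist x z) (dist y z) := by
  have hA : dist x y ^ 2 + (1 - ‖x‖ ^ 2) * (1 - ‖y‖ ^ 2)
      = 1 + ‖x‖ ^ 2 * ‖y‖ ^ 2 - 2 * (inner ℝ x y : ℝ) := by
    rw [dist_eq_norm, norm_sub_sq_real]; ring
  have key : dist x y ^ 2 + (1 - ‖x‖ ^ 2) * (1 - ‖y‖ ^ 2)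
      ≤ (2 * max (dist x z) (dist y z)) ^ 2 := by
    by_cases hy0 : y = 0
    · subst hy0
      have h1 : dist (0 : EuclideanSpace ℝ (Fin (n + 2))) z = 1 := by
        rw [dist_zero_left, hz]
      have h2 : (1 : ℝ) ≤ max (dist x z) (dist (0 : EuclideanSpace ℝ (Fin (n + 2))) z) := by
        rw [h1]; exact le_max_right _ _
      rw [hA]
      have h3 : (inner ℝ x (0 : EuclideanSpace ℝ (Fin (n + 2))) : ℝ) = 0 := inner_zero_right x
      rw [h3]
      simp only [norm_zero]
      nlinarith [le_max_left (dist x z) (dist (0:EuclideanSpace ℝ (Fin (n+2))) z), dist_nonneg (x := x) (y := z)]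
    · set v := ‖y‖ with hv
      have hv0 : 0 < v := norm_pos_iff.mpr hy0
      set w := v • x - v⁻¹ • y with hw
      have hwsq : ‖w‖ ^ 2 = v ^ 2 * ‖x‖ ^ 2 - 2 * (inner ℝ x y : ℝ) + 1 := by
        rw [hw, norm_sub_sq_real, real_inner_smul_left, real_inner_smul_right,
          norm_smul, norm_smul]
        rw [Real.norm_eq_abs, Real.norm_eq_abs, abs_of_nonneg hv0.le,
          abs_of_nonneg (inv_nonneg.mpr hv0.le)]
        have : v⁻¹ * ‖y‖ = 1 := inv_mul_cancel₀ hv0.ne'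
        rw [← hv, this]
        field_simp
      have hdecomp : w = v • (x - z) + (v • z - v⁻¹ • y) := by
        rw [hw]; module
      have hb : ‖v • z - v⁻¹ • y‖ = dist y z := by
        have h1 : ‖v • z - v⁻¹ • y‖ ^ 2 = dist y z ^ 2 := by
          rw [norm_sub_sq_real, real_inner_smul_left, real_inner_smul_right,
            norm_smul, norm_smul, dist_eq_norm, norm_sub_sq_real]
          rw [Real.norm_eq_abs, Real.norm_eq_abs, abs_of_nonneg hv0.le,
            abs_of_nonneg (inv_nonneg.mpr hv0.le), hz]
          have h2 : v⁻¹ * ‖y‖ = 1 := inv_mul_cancel₀ hv0.ne'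
          rw [← hv] at h2
          rw [h2, real_inner_comm z y]
          field_simp
          rw [← hv]
        have := congrArg Real.sqrt h1
        rwa [Real.sqrt_sq (norm_nonneg _), Real.sqrt_sq dist_nonneg] at this
      have ha : ‖v • (x - z)‖ = v * dist x z := by
        rw [norm_smul, Real.norm_eq_abs, abs_of_nonneg hv0.le, dist_eq_norm]
      have htri : ‖w‖ ≤ v * dist x z + dist y z := by
        calc ‖w‖ = ‖v • (x - z) + (v • z - v⁻¹ • y)‖ := by rw [← hdecomp]
          _ ≤ ‖v • (x - z)‖ + ‖v • z - v⁻¹ • y‖ := norm_add_le _ _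
          _ = v * dist x z + dist y z := by rw [ha, hb]
      have h1 := le_max_left (dist x z) (dist y z)
      have h2 := le_max_right (dist x z) (dist y z)
      have h3 : (0:ℝ) ≤ dist x z := dist_nonneg
      have h4 : (0:ℝ) ≤ dist y z := dist_nonneg
      have h5 : (0:ℝ) ≤ ‖w‖ := norm_nonneg _
      rw [hA]
      have h6 : v * dist x z + dist y z ≤ 2 * (dist x z ⊔ dist y z) := by
        nlinarith [mul_nonneg (sub_nonneg.mpr hy) h3]
      have h7 : ‖w‖ ^ 2 ≤ (2 * (dist x z ⊔ dist y z)) ^ 2 :=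
        pow_le_pow_left₀ h5 (htri.trans h6) 2
      linarith [hwsq]
  calc Real.sqrt (dist x y ^ 2 + (1 - ‖x‖ ^ 2) * (1 - ‖y‖ ^ 2))
      ≤ Real.sqrt ((2 * max (dist x z) (dist y z)) ^ 2) := Real.sqrt_le_sqrt key
    _ = 2 * max (dist x z) (dist y z) := Real.sqrt_sq (by positivity)


private lemma sInf_bounds {n : ℕ} (x y : EuclideanSpace ℝ (Fin (n + 2)))
    (hx : ‖x‖ < 1) (hy : ‖y‖ < 1) :
    Real.sqrt (dist x y ^ 2 + (1 - ‖x‖ ^ 2) * (1 - ‖y‖ ^ 2)) / 2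
      ≤ sInf ((fun z => max (dist x z) (dist y z)) ''
          sphere (0 : EuclideanSpace ℝ (Fin (n + 2))) 1) ∧
    sInf ((fun z => max (dist x z) (dist y z)) ''
          sphere (0 : EuclideanSpace ℝ (Fin (n + 2))) 1)
      ≤ Real.sqrt (dist x y ^ 2 + (1 - ‖x‖ ^ 2) * (1 - ‖y‖ ^ 2)) := by
  have hone : (EuclideanSpace.single (0 : Fin (n + 2)) (1:ℝ)) ∈
      sphere (0 : EuclideanSpace ℝ (Fin (n + 2))) 1 := by
    rw [mem_sphere_zero_iff_norm, EuclideanSpace.norm_single]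
    norm_num
  have hne : ((fun z => max (dist x z) (dist y z)) ''
      sphere (0 : EuclideanSpace ℝ (Fin (n + 2))) 1).Nonempty :=
    ⟨_, ⟨_, hone, rfl⟩⟩
  have hbdd : BddBelow ((fun z => max (dist x z) (dist y z)) ''
      sphere (0 : EuclideanSpace ℝ (Fin (n + 2))) 1) := by
    refine ⟨0, ?_⟩
    rintro b ⟨z, hz, rfl⟩
    exact le_trans dist_nonneg (le_max_left _ _)
  have hAnn : 0 ≤ dist x y ^ 2 + (1 - ‖x‖ ^ 2) * (1 - ‖y‖ ^ 2) := by
    have h1 : (0:ℝ) ≤ 1 - ‖x‖ ^ 2 := by nlinarith [norm_nonneg x]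
    have h2 : (0:ℝ) ≤ 1 - ‖y‖ ^ 2 := by nlinarith [norm_nonneg y]
    positivity
  constructor
  · apply le_csInf hne
    rintro b ⟨z, hz, rfl⟩
    have hz1 : ‖z‖ = 1 := mem_sphere_zero_iff_norm.mp hz
    have := upper_bound x y z hy.le hz1
    simp only []
    linarith
  · obtain ⟨z, hz1, hxz, hyz⟩ := exists_good_z x y hx hy
    have hzmem : z ∈ sphere (0 : EuclideanSpace ℝ (Fin (n + 2))) 1 :=
      mem_sphere_zero_iff_norm.mpr hz1
    have hdx : dist x z ≤ Real.sqrt (dist x y ^ 2 + (1 - ‖x‖ ^ 2) * (1 - ‖y‖ ^ 2)) := by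
      rw [Real.le_sqrt dist_nonneg hAnn, A_ident]
      rw [dist_eq_norm, norm_sub_sq_real, hz1]
      nlinarith [hxz]
    have hdy : dist y z ≤ Real.sqrt (dist x y ^ 2 + (1 - ‖x‖ ^ 2) * (1 - ‖y‖ ^ 2)) := by
      rw [Real.le_sqrt dist_nonneg hAnn, A_ident]
      rw [dist_eq_norm, norm_sub_sq_real, hz1]
      linarith [hyz]
    exact le_trans (csInf_le hbdd ⟨z, hzmem, rfl⟩) (max_le hdx hdy)

/-- For all `x ∈ 𝔹ⁿ` and `0 < r < 1`:
`B_ρ(x, log((2+r)/(2−r))) ⊆ B_c̃(x, r) ⊆ B_ρ(x, log((1+r)/(1−r)))`, i.e.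
`{y ∈ 𝔹ⁿ : th(ρ(x,y)/2) < r/2} ⊆ {y ∈ 𝔹ⁿ : c̃(x,y) < r} ⊆ {y ∈ 𝔹ⁿ : th(ρ(x,y)/2) < r}`. -/
theorem stmt_15 {n : ℕ} (x : EuclideanSpace ℝ (Fin (n + 2)))
    (hx : x ∈ ball (0 : EuclideanSpace ℝ (Fin (n + 2))) 1) (r : ℝ) (hr : r ∈ Ioo (0 : ℝ) 1) :
    {y | y ∈ ball (0 : EuclideanSpace ℝ (Fin (n + 2))) 1 ∧ thRhoB x y < r / 2} ⊆
      {y | y ∈ ball (0 : EuclideanSpace ℝ (Fin (n + 2))) 1 ∧ ctildeB x y < r} ∧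
    {y | y ∈ ball (0 : EuclideanSpace ℝ (Fin (n + 2))) 1 ∧ ctildeB x y < r} ⊆
      {y | y ∈ ball (0 : EuclideanSpace ℝ (Fin (n + 2))) 1 ∧ thRhoB x y < r} := by
  obtain ⟨hr0, hr1⟩ := hr
  have hx' : ‖x‖ < 1 := mem_ball_zero_iff.mp hx
  constructor
  · rintro y ⟨hyb, hlt⟩
    refine ⟨hyb, ?_⟩
    have hy' : ‖y‖ < 1 := mem_ball_zero_iff.mp hyb
    obtain ⟨hlb, hub⟩ := sInf_bounds x y hx' hy'
    rcases eq_or_ne (dist x y) 0 with hd | hd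
    · simp only [ctildeB, hd, zero_div]
      exact hr0
    · have hdpos : 0 < dist x y := dist_nonneg.lt_of_ne (Ne.symm hd)
      have hApos : 0 < dist x y ^ 2 + (1 - ‖x‖ ^ 2) * (1 - ‖y‖ ^ 2) := by
        have h1 : (0:ℝ) ≤ 1 - ‖x‖ ^ 2 := by nlinarith [norm_nonneg x]
        have h2 : (0:ℝ) ≤ 1 - ‖y‖ ^ 2 := by nlinarith [norm_nonneg y]
        nlinarith [mul_nonneg h1 h2]
      have hsq : 0 < Real.sqrt (dist x y ^ 2 + (1 - ‖x‖ ^ 2) * (1 - ‖y‖ ^ 2)) :=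
        Real.sqrt_pos.mpr hApos
      have hm : 0 < sInf ((fun z => max (dist x z) (dist y z)) ''
          sphere (0 : EuclideanSpace ℝ (Fin (n + 2))) 1) := by linarith
      simp only [thRhoB] at hlt
      simp only [ctildeB]
      have h1 : dist x y / sInf ((fun z => max (dist x z) (dist y z)) ''
            sphere (0 : EuclideanSpace ℝ (Fin (n + 2))) 1)
          ≤ dist x y / (Real.sqrt (dist x y ^ 2 + (1 - ‖x‖ ^ 2) * (1 - ‖y‖ ^ 2)) / 2) :=
        div_le_div_of_nonneg_left dist_nonneg (by linarith) hlb
      have h2 : dist x y / (Real.sqrt (dist x y ^ 2 + (1 - ‖x‖ ^ 2) * (1 - ‖y‖ ^ 2)) / 2)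
          = 2 * (dist x y / Real.sqrt (dist x y ^ 2 + (1 - ‖x‖ ^ 2) * (1 - ‖y‖ ^ 2))) := by
        field_simp
      linarith
  · rintro y ⟨hyb, hlt⟩
    refine ⟨hyb, ?_⟩
    have hy' : ‖y‖ < 1 := mem_ball_zero_iff.mp hyb
    obtain ⟨hlb, hub⟩ := sInf_bounds x y hx' hy'
    rcases eq_or_ne (dist x y) 0 with hd | hd
    · simp only [thRhoB, hd, zero_div]
      exact hr0
    · have hdpos : 0 < dist x y := dist_nonneg.lt_of_ne (Ne.symm hd)
      have hApos : 0 < dist x y ^ 2 + (1 - ‖x‖ ^ 2) * (1 - ‖y‖ ^ 2) := by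
        have h1 : (0:ℝ) ≤ 1 - ‖x‖ ^ 2 := by nlinarith [norm_nonneg x]
        have h2 : (0:ℝ) ≤ 1 - ‖y‖ ^ 2 := by nlinarith [norm_nonneg y]
        nlinarith [mul_nonneg h1 h2]
      have hsq : 0 < Real.sqrt (dist x y ^ 2 + (1 - ‖x‖ ^ 2) * (1 - ‖y‖ ^ 2)) :=
        Real.sqrt_pos.mpr hApos
      have hm : 0 < sInf ((fun z => max (dist x z) (dist y z)) ''
          sphere (0 : EuclideanSpace ℝ (Fin (n + 2))) 1) := by linarith
      simp only [ctildeB] at hlt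
      simp only [thRhoB]
      have h1 : dist x y / Real.sqrt (dist x y ^ 2 + (1 - ‖x‖ ^ 2) * (1 - ‖y‖ ^ 2))
          ≤ dist x y / sInf ((fun z => max (dist x z) (dist y z)) ''
            sphere (0 : EuclideanSpace ℝ (Fin (n + 2))) 1) :=
        div_le_div_of_nonneg_left dist_nonneg hm hub
      linarith
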